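/- arXiv:2604.06815 — 2 statements merged into one kernel-verified Lean document; each statement's English description precedes it below -/
import Mathlib

section
/- Let E be a real Banach space, let a < b be real numbers with midpoint m = (a + b)/2, and let f : ℝ → E be three times continuously differentiable on [a, b]. Then ‖ f′(m) − (f(b) − f(a))/(b − a) ‖² ≤ ((b − a)³/320) · ∫ₐᵇ ‖ f′′′(s) ‖² ds. -/
open intervalIntegral

open MeasureTheory Set in
private lemma cn_cs_aux {a b : ℝ} (hab : a ≤ b) {g h : ℝ → ℝ}
    (hg : ContinuousOn g (Set.Icc a b)) (hh : ContinuousOn h (Set.Icc a b))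
    (hg0 : ∀ t ∈ Set.Icc a b, 0 ≤ g t) (hh0 : ∀ t ∈ Set.Icc a b, 0 ≤ h t) :
    ∫ t in a..b, g t * h t ≤
      Real.sqrt (∫ t in a..b, g t ^ 2) * Real.sqrt (∫ t in a..b, h t ^ 2) := by
  rw [intervalIntegral.integral_of_le hab, intervalIntegral.integral_of_le hab,
    intervalIntegral.integral_of_le hab]
  set μ := MeasureTheory.volume.restrict (Set.Ioc a b) with hμ
  haveI : IsFiniteMeasure μ := by
    constructor
    rw [hμ, Measure.restrict_apply_univ]
    simp [Real.volume_Ioc]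
  have hmemg : MemLp g 2 μ := by
    obtain ⟨C, hC⟩ := isCompact_Icc.exists_bound_of_continuousOn hg
    refine (memLp_top_of_bound
      ((hg.mono Set.Ioc_subset_Icc_self).aestronglyMeasurable measurableSet_Ioc) C
      ?_).mono_exponent le_top
    filter_upwards [ae_restrict_mem measurableSet_Ioc] with x hx
    exact hC x (Set.Ioc_subset_Icc_self hx)
  have hmemh : MemLp h 2 μ := by
    obtain ⟨C, hC⟩ := isCompact_Icc.exists_bound_of_continuousOn hh
    refine (memLp_top_of_bound
      ((hh.mono Set.Ioc_subset_Icc_self).aestronglyMeasurable measurableSet_Ioc) C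
      ?_).mono_exponent le_top
    filter_upwards [ae_restrict_mem measurableSet_Ioc] with x hx
    exact hC x (Set.Ioc_subset_Icc_self hx)
  have h22 : (2:ℝ).HolderConjugate 2 := Real.HolderConjugate.two_two
  have hae_g : 0 ≤ᶠ[ae μ] g := by
    filter_upwards [ae_restrict_mem measurableSet_Ioc] with x hx
    exact hg0 x (Set.Ioc_subset_Icc_self hx)
  have hae_h : 0 ≤ᶠ[ae μ] h := by
    filter_upwards [ae_restrict_mem measurableSet_Ioc] with x hx
    exact hh0 x (Set.Ioc_subset_Icc_self hx)
  have key := MeasureTheory.integral_mul_le_Lp_mul_Lq_of_nonneg h22 hae_g hae_h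
    (by simpa using hmemg) (by simpa using hmemh)
  have e2 : ∀ x : ℝ, x ^ (2:ℝ) = x ^ 2 := fun x => by
    rw [show (2:ℝ) = ((2:ℕ):ℝ) by norm_num, Real.rpow_natCast]
  simp only [e2] at key
  calc ∫ x, g x * h x ∂μ
      ≤ (∫ x, g x ^ 2 ∂μ) ^ ((1:ℝ)/2) * (∫ x, h x ^ 2 ∂μ) ^ ((1:ℝ)/2) := key
    _ = Real.sqrt (∫ x, g x ^ 2 ∂μ) * Real.sqrt (∫ x, h x ^ 2 ∂μ) := by
        rw [Real.sqrt_eq_rpow, Real.sqrt_eq_rpow]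

/-- Quantitative Crank–Nicolson truncation error lemma: for `f : ℝ → E` three times
continuously differentiable on `[a, b]` with midpoint `m = (a+b)/2`,
`‖f′(m) − (f(b) − f(a))/(b − a)‖² ≤ ((b−a)³/320)·∫ₐᵇ ‖f′′′(s)‖² ds`. -/
theorem crank_nicolson_truncation_error {E : Type*} [NormedAddCommGroup E]
    [NormedSpace ℝ E] [CompleteSpace E] (a b m : ℝ) (hab : a < b) (hm : m = (a + b) / 2)
    (f : ℝ → E) (hf : ContDiffOn ℝ 3 f (Set.Icc a b)) :
    ‖derivWithin f (Set.Icc a b) m - ((b - a)⁻¹) • (f b - f a)‖ ^ 2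
      ≤ ((b - a) ^ 3 / 320) *
        ∫ s in a..b, ‖iteratedDerivWithin 3 f (Set.Icc a b) s‖ ^ 2 := by
  have hs : UniqueDiffOn ℝ (Set.Icc a b) := uniqueDiffOn_Icc hab
  have hma : m - a = (b - a) / 2 := by rw [hm]; ring
  have hbm : b - m = (b - a) / 2 := by rw [hm]; ring
  have hm1 : a < m := by rw [hm]; linarith
  have hm2 : m < b := by rw [hm]; linarith
  set F1 := derivWithin f (Set.Icc a b) with hF1
  set F2 := iteratedDerivWithin 2 f (Set.Icc a b) with hF2
  set F3 := iteratedDerivWithin 3 f (Set.Icc a b) with hF3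
  have hF1eq : Set.EqOn (iteratedDerivWithin 1 f (Set.Icc a b)) F1 (Set.Icc a b) :=
    fun x hx => congrFun iteratedDerivWithin_one x
  have c0 : ContinuousOn f (Set.Icc a b) := hf.continuousOn
  have c1 : ContinuousOn F1 (Set.Icc a b) :=
    (hf.continuousOn_iteratedDerivWithin (by norm_num) hs).congr fun x hx => (hF1eq hx).symm
  have c2 : ContinuousOn F2 (Set.Icc a b) := hf.continuousOn_iteratedDerivWithin (by norm_num) hs
  have c3 : ContinuousOn F3 (Set.Icc a b) := hf.continuousOn_iteratedDerivWithin (by norm_num) hs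
  have hnhds : ∀ t ∈ Set.Ioo a b, Set.Icc a b ∈ nhds t := fun t ht => Icc_mem_nhds ht.1 ht.2
  have d1 : ∀ t ∈ Set.Ioo a b, HasDerivAt f (F1 t) t := fun t ht =>
    ((hf.differentiableOn (by norm_num) t
      (Set.Ioo_subset_Icc_self ht)).hasDerivWithinAt).hasDerivAt (hnhds t ht)
  have d2 : ∀ t ∈ Set.Ioo a b, HasDerivAt F1 (F2 t) t := by
    intro t ht
    have hts : t ∈ Set.Icc a b := Set.Ioo_subset_Icc_self ht
    have hd : DifferentiableWithinAt ℝ (iteratedDerivWithin 1 f (Set.Icc a b)) (Set.Icc a b) t :=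
      hf.differentiableOn_iteratedDerivWithin (by norm_num) hs t hts
    have h1 : HasDerivWithinAt (iteratedDerivWithin 1 f (Set.Icc a b)) (F2 t) (Set.Icc a b) t := by
      have := hd.hasDerivWithinAt
      rwa [show derivWithin (iteratedDerivWithin 1 f (Set.Icc a b)) (Set.Icc a b) t = F2 t from
        (congrFun iteratedDerivWithin_succ t).symm] at this
    exact (h1.hasDerivAt (hnhds t ht)).congr_of_eventuallyEq
      (Filter.eventuallyEq_of_mem (hnhds t ht) fun x hx => (hF1eq hx).symm)
  have d3 : ∀ t ∈ Set.Ioo a b, HasDerivAt F2 (F3 t) t := by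
    intro t ht
    have hts : t ∈ Set.Icc a b := Set.Ioo_subset_Icc_self ht
    have hd : DifferentiableWithinAt ℝ F2 (Set.Icc a b) t :=
      hf.differentiableOn_iteratedDerivWithin (by norm_num) hs t hts
    have h1 : HasDerivWithinAt F2 (F3 t) (Set.Icc a b) t := by
      have := hd.hasDerivWithinAt
      rwa [show derivWithin F2 (Set.Icc a b) t = F3 t from by
        rw [hF3, show (3:ℕ) = 2 + 1 from rfl, iteratedDerivWithin_succ]] at this
    exact h1.hasDerivAt (hnhds t ht)
  -- FTC on [m, b]
  have key1 : (∫ t in m..b, ((b-t)^2/2) • F3 t)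
      = f b - (((b-m)^2/2) • F2 m + ((b-m) • F1 m + f m)) := by
    set Φ : ℝ → E := fun t => ((b-t)^2/2) • F2 t + ((b-t) • F1 t + f t) with hΦ
    have hsub : Set.Icc m b ⊆ Set.Icc a b := Set.Icc_subset_Icc hm1.le le_rfl
    have hcontΦ : ContinuousOn Φ (Set.Icc m b) := by
      apply ContinuousOn.add
      · exact (((continuousOn_const.sub continuousOn_id).pow 2).div_const 2).smul (c2.mono hsub)
      · exact ((continuousOn_const.sub continuousOn_id).smul (c1.mono hsub)).add (c0.mono hsub)
    have hderivΦ : ∀ t ∈ Set.Ioo m b, HasDerivWithinAt Φ (((b-t)^2/2) • F3 t) (Set.Ioi t) t := by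
      intro t ht
      have ht' : t ∈ Set.Ioo a b := ⟨hm1.trans ht.1, ht.2⟩
      have hc : HasDerivAt (fun y : ℝ => (b-y)^2/2) (-(b-t)) t := by
        have : HasDerivAt (fun y : ℝ => (b-y)^2/2) _ t := (((hasDerivAt_id t).const_sub b).pow 2).div_const 2
        convert this using 1
        simp
        try ring
      have hl : HasDerivAt (fun y : ℝ => b - y) (-1 : ℝ) t := by
        simpa using (hasDerivAt_id t).const_sub b
      have H := (hc.smul (d3 t ht')).add ((hl.smul (d2 t ht')).add (d1 t ht'))
      have : HasDerivAt Φ (((b-t)^2/2) • F3 t) t := by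
        convert H using 1
        rfl
        module
      exact this.hasDerivWithinAt
    have hint : IntervalIntegrable (fun t => ((b-t)^2/2) • F3 t) MeasureTheory.volume m b := by
      apply ContinuousOn.intervalIntegrable
      rw [Set.uIcc_of_le hm2.le]
      exact (((continuousOn_const.sub continuousOn_id).pow 2).div_const 2).smul (c3.mono hsub)
    have := intervalIntegral.integral_eq_sub_of_hasDeriv_right_of_le hm2.le hcontΦ hderivΦ hint
    rw [this, hΦ]
    simp
  -- FTC on [a, m]
  have key2 : (∫ t in a..m, ((t-a)^2/2) • F3 t)
      = (((m-a)^2/2) • F2 m + (-((m-a) • F1 m) + f m)) - f a := by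
    set Ψ : ℝ → E := fun t => ((t-a)^2/2) • F2 t + (-((t-a) • F1 t) + f t) with hΨ
    have hsub : Set.Icc a m ⊆ Set.Icc a b := Set.Icc_subset_Icc le_rfl hm2.le
    have hcontΨ : ContinuousOn Ψ (Set.Icc a m) := by
      apply ContinuousOn.add
      · exact (((continuousOn_id.sub continuousOn_const).pow 2).div_const 2).smul (c2.mono hsub)
      · exact (((continuousOn_id.sub continuousOn_const).smul (c1.mono hsub)).neg).add
          (c0.mono hsub)
    have hderivΨ : ∀ t ∈ Set.Ioo a m, HasDerivWithinAt Ψ (((t-a)^2/2) • F3 t) (Set.Ioi t) t := by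
      intro t ht
      have ht' : t ∈ Set.Ioo a b := ⟨ht.1, ht.2.trans hm2⟩
      have hc : HasDerivAt (fun y : ℝ => (y-a)^2/2) (t-a) t := by
        have : HasDerivAt (fun y : ℝ => (y-a)^2/2) _ t := (((hasDerivAt_id t).sub_const a).pow 2).div_const 2
        convert this using 1
        simp
        try ring
      have hl : HasDerivAt (fun y : ℝ => y - a) (1 : ℝ) t := (hasDerivAt_id t).sub_const a
      have H := (hc.smul (d3 t ht')).add (((hl.smul (d2 t ht')).neg).add (d1 t ht'))
      have : HasDerivAt Ψ (((t-a)^2/2) • F3 t) t := by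
        convert H using 1
        rfl
        module
      exact this.hasDerivWithinAt
    have hint : IntervalIntegrable (fun t => ((t-a)^2/2) • F3 t) MeasureTheory.volume a m := by
      apply ContinuousOn.intervalIntegrable
      rw [Set.uIcc_of_le hm1.le]
      exact (((continuousOn_id.sub continuousOn_const).pow 2).div_const 2).smul (c3.mono hsub)
    have := intervalIntegral.integral_eq_sub_of_hasDeriv_right_of_le hm1.le hcontΨ hderivΨ hint
    rw [this, hΨ]
    simp
  -- the kernel
  set K : ℝ → ℝ := fun t => if t ≤ m then (t-a)^2/2 else (b-t)^2/2 with hK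
  have hKcont : Continuous K := by
    apply Continuous.if_le
    · continuity
    · continuity
    · exact continuous_id
    · exact continuous_const
    · intro x hx
      rw [hx, show m - a = b - m from by rw [hma, hbm]]
  have hK0 : ∀ t, 0 ≤ K t := by
    intro t
    simp only [hK]
    split <;> positivity
  have hKsq : ∀ t ∈ Set.Icc a b, 0 ≤ K t := fun t _ => hK0 t
  set G : ℝ → E := fun t => K t • F3 t with hG
  have hGcont : ContinuousOn G (Set.Icc a b) := (hKcont.continuousOn).smul c3
  have hGint1 : IntervalIntegrable G MeasureTheory.volume a m := by
    apply ContinuousOn.intervalIntegrable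
    rw [Set.uIcc_of_le hm1.le]
    exact hGcont.mono (Set.Icc_subset_Icc le_rfl hm2.le)
  have hGint2 : IntervalIntegrable G MeasureTheory.volume m b := by
    apply ContinuousOn.intervalIntegrable
    rw [Set.uIcc_of_le hm2.le]
    exact hGcont.mono (Set.Icc_subset_Icc hm1.le le_rfl)
  have hGeq1 : (∫ t in a..m, G t) = ∫ t in a..m, ((t-a)^2/2) • F3 t := by
    apply intervalIntegral.integral_congr
    intro t ht
    rw [Set.uIcc_of_le hm1.le] at ht
    simp only [hG, hK]
    rw [if_pos ht.2]
  have hGeq2 : (∫ t in m..b, G t) = ∫ t in m..b, ((b-t)^2/2) • F3 t := by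
    apply intervalIntegral.integral_congr
    intro t ht
    rw [Set.uIcc_of_le hm2.le] at ht
    simp only [hG, hK]
    by_cases h : t ≤ m
    · have : t = m := le_antisymm h ht.1
      rw [if_pos h, this, show m - a = b - m from by rw [hma, hbm]]
    · rw [if_neg h]
  have hIdent : (∫ t in a..b, G t) = (f b - f a) - (b - a) • F1 m := by
    rw [← intervalIntegral.integral_add_adjacent_intervals hGint1 hGint2, hGeq1, hGeq2,
      key1, key2]
    have h1 : (m - a : ℝ) = (b-a)/2 := hma
    have h2 : (b - m : ℝ) = (b-a)/2 := hbm
    rw [h1, h2]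
    module
  -- norm estimates
  have hba : (0:ℝ) < b - a := by linarith
  have hRrw : F1 m - ((b - a)⁻¹) • (f b - f a) = -((b-a)⁻¹ • (∫ t in a..b, G t)) := by
    rw [hIdent]
    match_scalars <;> field_simp
  have hnorm1 : ‖∫ t in a..b, G t‖ ≤ ∫ t in a..b, K t * ‖F3 t‖ := by
    have := intervalIntegral.norm_integral_le_integral_norm (f := G)
      (μ := MeasureTheory.volume) hab.le
    refine this.trans_eq ?_
    apply intervalIntegral.integral_congr
    intro t _
    simp only [hG]
    rw [norm_smul, Real.norm_of_nonneg (hK0 t)]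
  have hF3norm_cont : ContinuousOn (fun t => ‖F3 t‖) (Set.Icc a b) := c3.norm
  have hCS : (∫ t in a..b, K t * ‖F3 t‖) ≤
      Real.sqrt (∫ t in a..b, K t ^ 2) * Real.sqrt (∫ t in a..b, ‖F3 t‖ ^ 2) :=
    cn_cs_aux hab.le hKcont.continuousOn hF3norm_cont hKsq (fun t _ => norm_nonneg _)
  -- compute ∫ K²
  have hKsq_val : (∫ t in a..b, K t ^ 2) = (b-a)^5/320 := by
    have hi1 : IntervalIntegrable (fun t => K t ^ 2) MeasureTheory.volume a m :=
      ((hKcont.pow 2).continuousOn).intervalIntegrable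
    have hi2 : IntervalIntegrable (fun t => K t ^ 2) MeasureTheory.volume m b :=
      ((hKcont.pow 2).continuousOn).intervalIntegrable
    rw [← intervalIntegral.integral_add_adjacent_intervals hi1 hi2]
    have e1 : (∫ t in a..m, K t ^ 2) = ∫ t in a..m, ((t-a)^2/2)^2 := by
      apply intervalIntegral.integral_congr
      intro t ht
      rw [Set.uIcc_of_le hm1.le] at ht
      simp only [hK]
      rw [if_pos ht.2]
    have e2 : (∫ t in m..b, K t ^ 2) = ∫ t in m..b, ((b-t)^2/2)^2 := by
      apply intervalIntegral.integral_congr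
      intro t ht
      rw [Set.uIcc_of_le hm2.le] at ht
      simp only [hK]
      by_cases h : t ≤ m
      · have : t = m := le_antisymm h ht.1
        rw [if_pos h, this, show m - a = b - m from by rw [hma, hbm]]
      · rw [if_neg h]
    have v1 : (∫ t in a..m, ((t-a)^2/2)^2) = (m-a)^5/20 := by
      have hP : ∀ t ∈ Set.uIcc a m, HasDerivAt (fun y : ℝ => (y-a)^5/20) (((t-a)^2/2)^2) t := by
        intro t _
        have : HasDerivAt (fun y : ℝ => (y-a)^5/20) _ t := (((hasDerivAt_id t).sub_const a).pow 5).div_const 20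
        convert this using 1
        simp
        try ring
      rw [intervalIntegral.integral_eq_sub_of_hasDerivAt hP
        (Continuous.intervalIntegrable (by fun_prop) _ _)]
      simp
      try ring
    have v2 : (∫ t in m..b, ((b-t)^2/2)^2) = (b-m)^5/20 := by
      have hP : ∀ t ∈ Set.uIcc m b, HasDerivAt (fun y : ℝ => -((b-y)^5/20)) (((b-t)^2/2)^2) t := by
        intro t _
        have : HasDerivAt (fun y : ℝ => -((b-y)^5/20)) _ t := ((((hasDerivAt_id t).const_sub b).pow 5).div_const 20).neg
        convert this using 1
        simp
        try ring
      rw [intervalIntegral.integral_eq_sub_of_hasDerivAt hP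
        (Continuous.intervalIntegrable (by fun_prop) _ _)]
      simp
      try ring
    rw [e1, e2, v1, v2, hma, hbm]
    ring
  -- assemble
  have hBnn : (0:ℝ) ≤ ∫ t in a..b, ‖F3 t‖ ^ 2 := by
    apply intervalIntegral.integral_nonneg hab.le
    intro t _
    positivity
  have hfinal : ‖F1 m - ((b - a)⁻¹) • (f b - f a)‖ ≤
      (b-a)⁻¹ * (Real.sqrt ((b-a)^5/320) * Real.sqrt (∫ t in a..b, ‖F3 t‖ ^ 2)) := by
    rw [hRrw, norm_neg, norm_smul, Real.norm_of_nonneg (inv_nonneg.2 hba.le)]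
    apply mul_le_mul_of_nonneg_left _ (inv_nonneg.2 hba.le)
    calc ‖∫ t in a..b, G t‖ ≤ ∫ t in a..b, K t * ‖F3 t‖ := hnorm1
      _ ≤ Real.sqrt (∫ t in a..b, K t ^ 2) * Real.sqrt (∫ t in a..b, ‖F3 t‖ ^ 2) := hCS
      _ = Real.sqrt ((b-a)^5/320) * Real.sqrt (∫ t in a..b, ‖F3 t‖ ^ 2) := by rw [hKsq_val]
  calc ‖F1 m - ((b - a)⁻¹) • (f b - f a)‖ ^ 2
      ≤ ((b-a)⁻¹ * (Real.sqrt ((b-a)^5/320) * Real.sqrt (∫ t in a..b, ‖F3 t‖ ^ 2))) ^ 2 := by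
        apply pow_le_pow_left₀ (norm_nonneg _) hfinal
    _ = ((b-a)⁻¹)^2 * (((b-a)^5/320) * (∫ t in a..b, ‖F3 t‖ ^ 2)) := by
        rw [mul_pow, mul_pow, Real.sq_sqrt (by positivity), Real.sq_sqrt hBnn]
    _ = ((b - a) ^ 3 / 320) * ∫ t in a..b, ‖F3 t‖ ^ 2 := by
        field_simp
end

section
/- Let E be a real Banach space, let a < b be real numbers with midpoint m = (a + b)/2, and let f : ℝ → E be twice continuously differentiable on [a, b]. Then ‖ (f(a) + f(b))/2 − f(m) ‖² ≤ ((b − a)³/48) · ∫ₐᵇ ‖ f′′(s) ‖² ds. -/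
open intervalIntegral

/-- Cauchy–Schwarz for interval integrals of continuous functions. -/
lemma cs_interval_aux {c d : ℝ} (h : c ≤ d) {u v : ℝ → ℝ}
    (hu : ContinuousOn u (Set.Icc c d)) (hv : ContinuousOn v (Set.Icc c d)) :
    (∫ s in c..d, u s * v s) ^ 2
      ≤ (∫ s in c..d, u s ^ 2) * (∫ s in c..d, v s ^ 2) := by
  have huIcc : Set.uIcc c d = Set.Icc c d := Set.uIcc_of_le h
  have hu' : ContinuousOn u (Set.uIcc c d) := by rw [huIcc]; exact hu
  have hv' : ContinuousOn v (Set.uIcc c d) := by rw [huIcc]; exact hv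
  have iuu : IntervalIntegrable (fun s => u s ^ 2) MeasureTheory.volume c d :=
    (hu'.pow 2).intervalIntegrable
  have ivv : IntervalIntegrable (fun s => v s ^ 2) MeasureTheory.volume c d :=
    (hv'.pow 2).intervalIntegrable
  have iuv : IntervalIntegrable (fun s => u s * v s) MeasureTheory.volume c d :=
    (hu'.mul hv').intervalIntegrable
  set A := ∫ s in c..d, u s ^ 2 with hA
  set B := ∫ s in c..d, u s * v s with hB
  set C := ∫ s in c..d, v s ^ 2 with hC
  have key : ∀ t : ℝ, 0 ≤ A * (t * t) + (2 * B) * t + C := by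
    intro t
    have h0 : 0 ≤ ∫ s in c..d, (t * u s + v s) ^ 2 :=
      intervalIntegral.integral_nonneg h (fun s _ => sq_nonneg _)
    have hexp : (∫ s in c..d, (t * u s + v s) ^ 2)
        = A * (t * t) + (2 * B) * t + C := by
      have heq : ∀ s : ℝ, (t * u s + v s) ^ 2
          = (t * t) * u s ^ 2 + (2 * t) * (u s * v s) + v s ^ 2 := by
        intro s; ring
      simp_rw [heq]
      rw [intervalIntegral.integral_add ((iuu.const_mul _).add (iuv.const_mul _)) ivv,
        intervalIntegral.integral_add (iuu.const_mul _) (iuv.const_mul _),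
        intervalIntegral.integral_const_mul, intervalIntegral.integral_const_mul]
      ring
    linarith [hexp ▸ h0]
  have hd := discrim_le_zero key
  rw [discrim] at hd
  nlinarith [hd]

set_option maxHeartbeats 1000000 in
/-- Second-order accuracy of the midpoint-averaging step of the Crank–Nicolson scheme:
for `f : ℝ → E` twice continuously differentiable on `[a, b]` with midpoint
`m = (a+b)/2`, `‖(f(a) + f(b))/2 − f(m)‖² ≤ ((b−a)³/48)·∫ₐᵇ ‖f′′(s)‖² ds`. -/
theorem midpoint_average_error {E : Type*} [NormedAddCommGroup E]
    [NormedSpace ℝ E] [CompleteSpace E] (a b m : ℝ) (hab : a < b) (hm : m = (a + b) / 2)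
    (f : ℝ → E) (hf : ContDiffOn ℝ 2 f (Set.Icc a b)) :
    ‖(1 / 2 : ℝ) • (f a + f b) - f m‖ ^ 2
      ≤ ((b - a) ^ 3 / 48) *
        ∫ s in a..b, ‖iteratedDerivWithin 2 f (Set.Icc a b) s‖ ^ 2 := by
  subst hm
  set m := (a + b) / 2 with hm
  have hab' : a ≤ b := hab.le
  have ham : a ≤ m := by rw [hm]; linarith
  have hmb : m ≤ b := by rw [hm]; linarith
  have hmI : m ∈ Set.Icc a b := ⟨ham, hmb⟩
  have haI : a ∈ Set.Icc a b := ⟨le_refl a, hab'⟩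
  have hbI : b ∈ Set.Icc a b := ⟨hab', le_refl b⟩
  have hUD : UniqueDiffOn ℝ (Set.Icc a b) := uniqueDiffOn_Icc hab
  set f1 := derivWithin f (Set.Icc a b) with hf1
  set f2 := iteratedDerivWithin 2 f (Set.Icc a b) with hf2
  have hf1c : ContDiffOn ℝ 1 f1 (Set.Icc a b) := hf.derivWithin hUD (by norm_num)
  have hf2c : ContinuousOn f2 (Set.Icc a b) :=
    hf.continuousOn_iteratedDerivWithin le_rfl hUD
  have hf2eq : ∀ x ∈ Set.Icc a b, derivWithin f1 (Set.Icc a b) x = f2 x := by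
    intro x hx
    rw [hf2, show (2 : ℕ) = 1 + 1 from rfl, iteratedDerivWithin_succ',
      iteratedDerivWithin_one]
  have hderiv1 : ∀ x ∈ Set.Icc a b, HasDerivWithinAt f (f1 x) (Set.Icc a b) x :=
    fun x hx => ((hf.differentiableOn (by norm_num)) x hx).hasDerivWithinAt
  have hderiv2 : ∀ x ∈ Set.Icc a b, HasDerivWithinAt f1 (f2 x) (Set.Icc a b) x := by
    intro x hx
    have hd : DifferentiableWithinAt ℝ f1 (Set.Icc a b) x :=
      (hf1c.differentiableOn (by norm_num)) x hx
    have := hd.hasDerivWithinAt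
    rwa [hf2eq x hx] at this
  have hnhds : ∀ x ∈ Set.Ioo a b, Set.Icc a b ∈ nhds x :=
    fun x hx => Icc_mem_nhds hx.1 hx.2
  -- Taylor with integral remainder via FTC
  have FTC : ∀ c ∈ Set.Icc a b, ∀ d ∈ Set.Icc a b, c ≤ d → ∀ y : ℝ,
      (∫ s in c..d, (y - s) • f2 s)
        = (f d + (y - d) • f1 d) - (f c + (y - c) • f1 c) := by
    intro c hc d hd hcd y
    have hsub : Set.Icc c d ⊆ Set.Icc a b := Set.Icc_subset_Icc hc.1 hd.2
    have hsub' : Set.Ioo c d ⊆ Set.Ioo a b := Set.Ioo_subset_Ioo hc.1 hd.2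
    apply intervalIntegral.integral_eq_sub_of_hasDeriv_right_of_le hcd
    · exact (hf.continuousOn.mono hsub).add
        (((continuous_const.sub continuous_id).continuousOn).smul
          (hf1c.continuousOn.mono hsub))
    · intro x hx
      have hx' : x ∈ Set.Ioo a b := hsub' hx
      have hxI : x ∈ Set.Icc a b := Set.Ioo_subset_Icc_self hx'
      have h1 : HasDerivAt f (f1 x) x := (hderiv1 x hxI).hasDerivAt (hnhds x hx')
      have h2 : HasDerivAt f1 (f2 x) x := (hderiv2 x hxI).hasDerivAt (hnhds x hx')
      have hy : HasDerivAt (fun s : ℝ => y - s) (-1) x := by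
        simpa using (hasDerivAt_id x).const_sub y
      have hcomb := h1.add (hy.smul h2)
      have : HasDerivAt (fun s => f s + (y - s) • f1 s) ((y - x) • f2 x) x := by
        convert hcomb using 1
        · rfl
        · module
      exact this.hasDerivWithinAt
    · have hcont : ContinuousOn (fun s => (y - s) • f2 s) (Set.uIcc c d) := by
        rw [Set.uIcc_of_le hcd]
        exact ((continuous_const.sub continuous_id).continuousOn).smul
          (hf2c.mono hsub)
      exact hcont.intervalIntegrable
  have hRa : f a - f m - (a - m) • f1 m = ∫ s in a..m, (s - a) • f2 s := by
    have h := FTC a haI m hmI ham a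
    have h2 : (∫ s in a..m, (s - a) • f2 s) = -∫ s in a..m, (a - s) • f2 s := by
      rw [← intervalIntegral.integral_neg]
      refine intervalIntegral.integral_congr fun s _ => ?_
      module
    rw [h2, h]; module
  have hRb : f b - f m - (b - m) • f1 m = ∫ s in m..b, (b - s) • f2 s := by
    rw [FTC m hmI b hbI hmb b]; module
  set Ra := ∫ s in a..m, (s - a) • f2 s with hRadef
  set Rb := ∫ s in m..b, (b - s) • f2 s with hRbdef
  have hE : (1 / 2 : ℝ) • (f a + f b) - f m = (1 / 2 : ℝ) • (Ra + Rb) := by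
    rw [← hRa, ← hRb, hm]
    module
  -- Norm bounds via Cauchy–Schwarz
  have hsubam : Set.Icc a m ⊆ Set.Icc a b := Set.Icc_subset_Icc le_rfl hmb
  have hsubmb : Set.Icc m b ⊆ Set.Icc a b := Set.Icc_subset_Icc ham le_rfl
  have hPa : ‖Ra‖ ≤ ∫ s in a..m, |s - a| * ‖f2 s‖ := by
    refine (intervalIntegral.norm_integral_le_integral_norm ham).trans_eq ?_
    refine intervalIntegral.integral_congr fun s _ => ?_
    rw [norm_smul, Real.norm_eq_abs]
  have hPb : ‖Rb‖ ≤ ∫ s in m..b, |b - s| * ‖f2 s‖ := by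
    refine (intervalIntegral.norm_integral_le_integral_norm hmb).trans_eq ?_
    refine intervalIntegral.integral_congr fun s _ => ?_
    rw [norm_smul, Real.norm_eq_abs]
  have csa : (∫ s in a..m, |s - a| * ‖f2 s‖) ^ 2
      ≤ (∫ s in a..m, (s - a) ^ 2) * (∫ s in a..m, ‖f2 s‖ ^ 2) := by
    have h := cs_interval_aux ham (u := fun s => |s - a|) (v := fun s => ‖f2 s‖)
      ((continuous_id.sub continuous_const).abs.continuousOn)
      ((hf2c.mono hsubam).norm)
    have heq : (∫ s in a..m, |s - a| ^ 2) = ∫ s in a..m, (s - a) ^ 2 :=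
      intervalIntegral.integral_congr fun s _ => sq_abs _
    rwa [heq] at h
  have csb : (∫ s in m..b, |b - s| * ‖f2 s‖) ^ 2
      ≤ (∫ s in m..b, (b - s) ^ 2) * (∫ s in m..b, ‖f2 s‖ ^ 2) := by
    have h := cs_interval_aux hmb (u := fun s => |b - s|) (v := fun s => ‖f2 s‖)
      ((continuous_const.sub continuous_id).abs.continuousOn)
      ((hf2c.mono hsubmb).norm)
    have heq : (∫ s in m..b, |b - s| ^ 2) = ∫ s in m..b, (b - s) ^ 2 :=
      intervalIntegral.integral_congr fun s _ => sq_abs _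
    rwa [heq] at h
  have hKa : (∫ s in a..m, (s - a) ^ 2) = (m - a) ^ 3 / 3 := by
    rw [show (fun s : ℝ => (s - a) ^ 2) = fun s : ℝ => (fun x : ℝ => x ^ 2) (s - a)
        from rfl,
      intervalIntegral.integral_comp_sub_right (fun x : ℝ => x ^ 2) a]
    rw [sub_self, integral_pow]
    norm_num
  have hKb : (∫ s in m..b, (b - s) ^ 2) = (b - m) ^ 3 / 3 := by
    rw [show (fun s : ℝ => (b - s) ^ 2) = fun s : ℝ => (fun x : ℝ => x ^ 2) (b - s)
        from rfl,
      intervalIntegral.integral_comp_sub_left (fun x : ℝ => x ^ 2) b]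
    rw [sub_self, integral_pow]
    norm_num
  -- squared-norm integrals
  set I1 := ∫ s in a..m, ‖f2 s‖ ^ 2 with hI1
  set I2 := ∫ s in m..b, ‖f2 s‖ ^ 2 with hI2
  have hI1nn : 0 ≤ I1 := intervalIntegral.integral_nonneg ham fun s _ => sq_nonneg _
  have hI2nn : 0 ≤ I2 := intervalIntegral.integral_nonneg hmb fun s _ => sq_nonneg _
  have hint1 : IntervalIntegrable (fun s => ‖f2 s‖ ^ 2) MeasureTheory.volume a m := by
    have : ContinuousOn (fun s => ‖f2 s‖ ^ 2) (Set.uIcc a m) := by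
      rw [Set.uIcc_of_le ham]; exact ((hf2c.mono hsubam).norm).pow 2
    exact this.intervalIntegrable
  have hint2 : IntervalIntegrable (fun s => ‖f2 s‖ ^ 2) MeasureTheory.volume m b := by
    have : ContinuousOn (fun s => ‖f2 s‖ ^ 2) (Set.uIcc m b) := by
      rw [Set.uIcc_of_le hmb]; exact ((hf2c.mono hsubmb).norm).pow 2
    exact this.intervalIntegrable
  have hsplit : I1 + I2 = ∫ s in a..b, ‖f2 s‖ ^ 2 :=
    intervalIntegral.integral_add_adjacent_intervals hint1 hint2
  rw [← hsplit, hE]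
  -- assemble
  have hXa : 0 ≤ ∫ s in a..m, |s - a| * ‖f2 s‖ := le_trans (norm_nonneg _) hPa
  have hXb : 0 ≤ ∫ s in m..b, |b - s| * ‖f2 s‖ := le_trans (norm_nonneg _) hPb
  have hRa2 : ‖Ra‖ ^ 2 ≤ (m - a) ^ 3 / 3 * I1 := by
    calc ‖Ra‖ ^ 2 ≤ (∫ s in a..m, |s - a| * ‖f2 s‖) ^ 2 := by
          exact pow_le_pow_left₀ (norm_nonneg _) hPa 2
      _ ≤ (m - a) ^ 3 / 3 * I1 := by rw [← hKa]; exact csa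
  have hRb2 : ‖Rb‖ ^ 2 ≤ (b - m) ^ 3 / 3 * I2 := by
    calc ‖Rb‖ ^ 2 ≤ (∫ s in m..b, |b - s| * ‖f2 s‖) ^ 2 := by
          exact pow_le_pow_left₀ (norm_nonneg _) hPb 2
      _ ≤ (b - m) ^ 3 / 3 * I2 := by rw [← hKb]; exact csb
  have hnorm : ‖(1 / 2 : ℝ) • (Ra + Rb)‖ ≤ (1 / 2) * (‖Ra‖ + ‖Rb‖) := by
    rw [norm_smul, Real.norm_eq_abs, abs_of_pos (by norm_num : (0:ℝ) < 1 / 2)]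
    have h := norm_add_le Ra Rb
    nlinarith [h]
  have hma : m - a = (b - a) / 2 := by rw [hm]; ring
  have hbm : b - m = (b - a) / 2 := by rw [hm]; ring
  rw [hma] at hRa2
  rw [hbm] at hRb2
  have hN2 : ‖(1 / 2 : ℝ) • (Ra + Rb)‖ ^ 2 ≤ ((1 / 2) * (‖Ra‖ + ‖Rb‖)) ^ 2 :=
    pow_le_pow_left₀ (norm_nonneg _) hnorm 2
  clear_value Ra Rb I1 I2
  calc ‖(1 / 2 : ℝ) • (Ra + Rb)‖ ^ 2
      ≤ ((1 / 2) * (‖Ra‖ + ‖Rb‖)) ^ 2 := hN2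
    _ ≤ (1 / 2) * (‖Ra‖ ^ 2 + ‖Rb‖ ^ 2) := by nlinarith [sq_nonneg (‖Ra‖ - ‖Rb‖)]
    _ ≤ (1 / 2) * (((b - a) / 2) ^ 3 / 3 * I1 + ((b - a) / 2) ^ 3 / 3 * I2) := by
        linarith [hRa2, hRb2]
    _ = (b - a) ^ 3 / 48 * (I1 + I2) := by ring
end
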